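/- Suppose σ is meromorphic near t₀ > 0 and σ(t) = c/(t-t₀) + O(t-t₀) as t → t₀ with c ≠ 0, and σ satisfies the requirement that t(q²-1)(tq_t)_t = q(tq_t)² + (1/4)(t-α²)q + (1/4)tq³(q²-2) with q = σ having a simple pole at t₀. Then the Laurent expansion forces c² = 4t₀. -/

import Mathlib

open Asymptotics Filter Metric Set

set_option maxHeartbeats 1600000 in
/-- if `q(t) = c/(t-t₀) + O(t-t₀)` is meromorphic near `t₀ > 0` with a simple
pole (`c ≠ 0`) and satisfies
`t(q²-1)(tq')' = q(tq')² + (1/4)(t-α²)q + (1/4)tq³(q²-2)`,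
then matching the highest-order pole terms forces `c² = 4t₀`. -/
theorem pole_coefficient_constraint
    (t₀ : ℝ) (ht₀ : 0 < t₀) (α : ℝ) (c : ℂ) (hc : c ≠ 0)
    (ρ : ℝ) (hρ : 0 < ρ) (q r : ℂ → ℂ)
    (hr : AnalyticOnNhd ℂ r (Metric.ball (t₀ : ℂ) ρ))
    (hrO : r =O[nhdsWithin (t₀ : ℂ) {(t₀ : ℂ)}ᶜ] fun t => t - (t₀ : ℂ))
    (hqdef : ∀ t ∈ Metric.ball (t₀ : ℂ) ρ \ {(t₀ : ℂ)}, q t = c / (t - (t₀ : ℂ)) + r t)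
    (hODE : ∀ t ∈ Metric.ball (t₀ : ℂ) ρ \ {(t₀ : ℂ)},
      t * ((q t) ^ 2 - 1) * deriv (fun s => s * deriv q s) t
        = q t * (t * deriv q t) ^ 2 + (1 / 4) * (t - (α : ℂ) ^ 2) * q t
          + (1 / 4) * t * (q t) ^ 3 * ((q t) ^ 2 - 2)) :
    c ^ 2 = 4 * (t₀ : ℂ) := by
  have ht₀C : (t₀ : ℂ) ∈ Metric.ball (t₀ : ℂ) ρ := Metric.mem_ball_self hρ
  have hopen : IsOpen (Metric.ball (t₀ : ℂ) ρ \ {(t₀ : ℂ)}) :=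
    Metric.isOpen_ball.sdiff isClosed_singleton
  have hr' : AnalyticOnNhd ℂ (deriv r) (Metric.ball (t₀ : ℂ) ρ) := hr.deriv
  have hr'' : AnalyticOnNhd ℂ (deriv (deriv r)) (Metric.ball (t₀ : ℂ) ρ) := hr'.deriv
  -- formula for deriv q on the punctured ball
  have hq' : ∀ t ∈ Metric.ball (t₀ : ℂ) ρ \ {(t₀ : ℂ)},
      deriv q t = -c / (t - (t₀ : ℂ)) ^ 2 + deriv r t := by
    intro t ht
    have htne : t ≠ (t₀ : ℂ) := ht.2
    have hεne : t - (t₀ : ℂ) ≠ 0 := sub_ne_zero.2 htne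
    have hmem : Metric.ball (t₀ : ℂ) ρ \ {(t₀ : ℂ)} ∈ nhds t := hopen.mem_nhds ht
    have heq : q =ᶠ[nhds t] fun s => c / (s - (t₀ : ℂ)) + r s :=
      Filter.eventuallyEq_of_mem hmem hqdef
    rw [heq.deriv_eq]
    have h1 : HasDerivAt (fun s : ℂ => s - (t₀ : ℂ)) 1 t := (hasDerivAt_id t).sub_const _
    have h2 : HasDerivAt (fun s : ℂ => (s - (t₀ : ℂ))⁻¹) (-1 / (t - (t₀ : ℂ)) ^ 2) t := by
      simpa [Pi.inv_def] using h1.inv hεne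
    have hrd : HasDerivAt r (deriv r t) t := (hr t ht.1).differentiableAt.hasDerivAt
    have h3 : HasDerivAt (fun s : ℂ => c / (s - (t₀ : ℂ)) + r s)
        (-c / (t - (t₀ : ℂ)) ^ 2 + deriv r t) t := by
      have h4 := (h2.const_mul c).add hrd
      have : c * (-1 / (t - (t₀ : ℂ)) ^ 2) = -c / (t - (t₀ : ℂ)) ^ 2 := by ring
      simpa [div_eq_mul_inv, this, Pi.add_def] using h4
    exact h3.deriv
  -- formula for the second-order term
  have hD : ∀ t ∈ Metric.ball (t₀ : ℂ) ρ \ {(t₀ : ℂ)},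
      deriv (fun s => s * deriv q s) t
        = (-c / (t - (t₀ : ℂ)) ^ 2 + deriv r t)
          + t * (2 * c / (t - (t₀ : ℂ)) ^ 3 + deriv (deriv r) t) := by
    intro t ht
    have htne : t ≠ (t₀ : ℂ) := ht.2
    have hεne : t - (t₀ : ℂ) ≠ 0 := sub_ne_zero.2 htne
    have hmem : Metric.ball (t₀ : ℂ) ρ \ {(t₀ : ℂ)} ∈ nhds t := hopen.mem_nhds ht
    have heq2 : (fun s => s * deriv q s)
        =ᶠ[nhds t] fun s => s * (-c / (s - (t₀ : ℂ)) ^ 2 + deriv r s) := by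
      refine Filter.eventuallyEq_of_mem hmem fun s hs => ?_
      rw [hq' s hs]
    rw [heq2.deriv_eq]
    have h1 : HasDerivAt (fun s : ℂ => s - (t₀ : ℂ)) 1 t := (hasDerivAt_id t).sub_const _
    have hpow : HasDerivAt (fun s : ℂ => (s - (t₀ : ℂ)) ^ 2) (2 * (t - (t₀ : ℂ))) t := by
      simpa [Pi.pow_def] using h1.pow 2
    have hinv : HasDerivAt (fun s : ℂ => ((s - (t₀ : ℂ)) ^ 2)⁻¹)
        (-(2 * (t - (t₀ : ℂ))) / ((t - (t₀ : ℂ)) ^ 2) ^ 2) t :=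
      hpow.inv (pow_ne_zero 2 hεne)
    have hrd2 : HasDerivAt (deriv r) (deriv (deriv r) t) t :=
      (hr' t ht.1).differentiableAt.hasDerivAt
    have hg : HasDerivAt (fun s : ℂ => -c / (s - (t₀ : ℂ)) ^ 2 + deriv r s)
        (-c * (-(2 * (t - (t₀ : ℂ))) / ((t - (t₀ : ℂ)) ^ 2) ^ 2) + deriv (deriv r) t) t :=
      (hinv.const_mul (-c)).add hrd2
    have hψ : HasDerivAt (fun s : ℂ => s * (-c / (s - (t₀ : ℂ)) ^ 2 + deriv r s))
        (1 * (-c / (t - (t₀ : ℂ)) ^ 2 + deriv r t)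
          + t * (-c * (-(2 * (t - (t₀ : ℂ))) / ((t - (t₀ : ℂ)) ^ 2) ^ 2)
              + deriv (deriv r) t)) t := (hasDerivAt_id t).mul hg
    rw [hψ.deriv]
    field_simp
  -- the two "desingularized" analytic expressions
  set f : ℂ → ℂ := fun t =>
    t * (c ^ 2 + 2 * c * (t - (t₀ : ℂ)) * r t + (t - (t₀ : ℂ)) ^ 2 * ((r t) ^ 2 - 1))
      * (2 * c * t - c * (t - (t₀ : ℂ))
          + (t - (t₀ : ℂ)) ^ 3 * (deriv r t + t * deriv (deriv r) t)) with hf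
  set g : ℂ → ℂ := fun t =>
    (c + (t - (t₀ : ℂ)) * r t) * (t * (-c + (t - (t₀ : ℂ)) ^ 2 * deriv r t)) ^ 2
      + (1 / 4) * (t - (α : ℂ) ^ 2) * (c + (t - (t₀ : ℂ)) * r t) * (t - (t₀ : ℂ)) ^ 4
      + (1 / 4) * t * (c + (t - (t₀ : ℂ)) * r t) ^ 3
          * ((c + (t - (t₀ : ℂ)) * r t) ^ 2 - 2 * (t - (t₀ : ℂ)) ^ 2) with hg
  have hfg : ∀ t ∈ Metric.ball (t₀ : ℂ) ρ \ {(t₀ : ℂ)}, f t = g t := by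
    intro t ht
    have hεne : t - (t₀ : ℂ) ≠ 0 := sub_ne_zero.2 ht.2
    have h1 : f t = (t - (t₀ : ℂ)) ^ 5
        * (t * ((q t) ^ 2 - 1) * deriv (fun s => s * deriv q s) t) := by
      rw [hqdef t ht, hD t ht]
      simp only [hf]
      field_simp
      ring
    have h2 : g t = (t - (t₀ : ℂ)) ^ 5
        * (q t * (t * deriv q t) ^ 2 + (1 / 4) * (t - (α : ℂ) ^ 2) * q t
            + (1 / 4) * t * (q t) ^ 3 * ((q t) ^ 2 - 2)) := by
      rw [hqdef t ht, hq' t ht]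
      simp only [hg]
      field_simp
    rw [h1, h2, hODE t ht]
  -- continuity of f and g at t₀
  have hrc : ContinuousAt r (t₀ : ℂ) := (hr _ ht₀C).continuousAt
  have hrc' : ContinuousAt (deriv r) (t₀ : ℂ) := (hr' _ ht₀C).continuousAt
  have hrc'' : ContinuousAt (deriv (deriv r)) (t₀ : ℂ) := (hr'' _ ht₀C).continuousAt
  have hfc : ContinuousAt f (t₀ : ℂ) := by fun_prop
  have hgc : ContinuousAt g (t₀ : ℂ) := by fun_prop
  -- eventual equality along the punctured neighbourhood filter
  have hmem_ev : ∀ᶠ t in nhdsWithin (t₀ : ℂ) {(t₀ : ℂ)}ᶜ,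
      t ∈ Metric.ball (t₀ : ℂ) ρ \ {(t₀ : ℂ)} := by
    have hb : Metric.ball (t₀ : ℂ) ρ ∈ nhdsWithin (t₀ : ℂ) {(t₀ : ℂ)}ᶜ :=
      mem_nhdsWithin_of_mem_nhds (Metric.isOpen_ball.mem_nhds ht₀C)
    have hcompl : {(t₀ : ℂ)}ᶜ ∈ nhdsWithin (t₀ : ℂ) {(t₀ : ℂ)}ᶜ := self_mem_nhdsWithin
    filter_upwards [hb, hcompl] with t h1 h2
    exact ⟨h1, h2⟩
  have hev : f =ᶠ[nhdsWithin (t₀ : ℂ) {(t₀ : ℂ)}ᶜ] g := by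
    filter_upwards [hmem_ev] with t ht
    exact hfg t ht
  have hTf : Tendsto f (nhdsWithin (t₀ : ℂ) {(t₀ : ℂ)}ᶜ) (nhds (f (t₀ : ℂ))) :=
    hfc.continuousWithinAt
  have hTg : Tendsto f (nhdsWithin (t₀ : ℂ) {(t₀ : ℂ)}ᶜ) (nhds (g (t₀ : ℂ))) :=
    hgc.continuousWithinAt.congr' hev.symm
  have heq : f (t₀ : ℂ) = g (t₀ : ℂ) := tendsto_nhds_unique hTf hTg
  -- extract the coefficient identity
  have ht₀ne : (t₀ : ℂ) ≠ 0 := by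
    exact_mod_cast Complex.ofReal_ne_zero.2 (ne_of_gt ht₀)
  have hkey : c ^ 3 * (t₀ : ℂ) * c ^ 2 = c ^ 3 * (t₀ : ℂ) * (4 * (t₀ : ℂ)) := by
    simp only [hf, hg] at heq
    linear_combination -4 * heq
  have hne : c ^ 3 * (t₀ : ℂ) ≠ 0 := mul_ne_zero (pow_ne_zero 3 hc) ht₀ne
  exact mul_left_cancel₀ hne hkey
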